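/- arXiv:1312.3063 — 2 statements merged into one kernel-verified Lean document; each statement's English description precedes it below -/
import Mathlib

section
/- For d ≠ 0 and the matrix A = [[0,0,1,0],[0,0,0,1],[0,d,d/2,-b],[-d,0,-b,-a]] over the rationals, one has A · M_F · A^{-1} = [[1,1,0,0],[0,1,0,0],[d,d,1,0],[0,-k,-1,1]], where M_F = [[1,1,1/2,1/6],[0,1,1,1/2],[0,0,1,1],[0,0,0,1]] and k = d/6 + 2b. -/
open Matrix

/-- The monodromy matrix around `0` in the normalised Frobenius basis. -/
def MF : Matrix (Fin 4) (Fin 4) ℚ :=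
  !![1, 1, 1/2, 1/6; 0, 1, 1, 1/2; 0, 0, 1, 1; 0, 0, 0, 1]

/-- The base change matrix `A`. -/
def Amat (a b d : ℚ) : Matrix (Fin 4) (Fin 4) ℚ :=
  !![0,0,1,0; 0,0,0,1; 0,d,d/2,-b; -d,0,-b,-a]

/-- The conjugation identity `A M_F A⁻¹ = M`, where `k = d/6 + 2b`. -/
theorem A_conj_MF (a b d : ℚ) (hd : d ≠ 0) :
    Amat a b d * MF * (Amat a b d)⁻¹ =
      !![1,1,0,0; 0,1,0,0; d,d,1,0; 0,-(d/6 + 2*b),-1,1] := by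
  have hdet : IsUnit (Amat a b d).det := by
    have : (Amat a b d).det = d * d := by
      simp [Amat, Matrix.det_succ_row_zero, Fin.sum_univ_succ, Fin.succAbove, Matrix.vecHead, Matrix.vecTail]
    rw [this, isUnit_iff_ne_zero]
    exact mul_ne_zero hd hd
  have key : Amat a b d * MF =
      !![1,1,0,0; 0,1,0,0; d,d,1,0; 0,-(d/6 + 2*b),-1,1] * Amat a b d := by
    ext i j
    fin_cases i <;> fin_cases j <;>
      simp [Amat, MF, Matrix.mul_apply, Fin.sum_univ_four, Matrix.vecHead, Matrix.vecTail] <;> ring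
  calc Amat a b d * MF * (Amat a b d)⁻¹
      = !![1,1,0,0; 0,1,0,0; d,d,1,0; 0,-(d/6 + 2*b),-1,1] * Amat a b d * (Amat a b d)⁻¹ := by
        rw [key]
    _ = _ := by rw [Matrix.mul_nonsing_inv_cancel_right _ _ hdet]
end

section
/- The fifteen nonzero vectors of (Z/2)^4 are partitioned into exactly six pentades (5-element sets of vectors pairwise pairing to 1 under the symplectic form), namely {a,d,g,m,o}, {a,e,f,l,n}, {b,h,k,n,o}, {b,i,j,l,m}, {c,d,e,i,k}, {c,f,g,h,j}, and each nonzero vector belongs to exactly two pentades. -/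
open Matrix

/-- The symplectic form `⟨u,v⟩ = u₁v₃ + u₂v₄ + u₃v₁ + u₄v₂` on `(ℤ/2)^4`. -/
def sform (u v : Fin 4 → ZMod 2) : ZMod 2 :=
  u 0 * v 2 + u 1 * v 3 + u 2 * v 0 + u 3 * v 1

/-- A pentade is a 5-element set of nonzero vectors of `(ℤ/2)^4` pairwise
pairing to `1`. -/
def IsPentade (P : Finset (Fin 4 → ZMod 2)) : Prop :=
  P.card = 5 ∧ (∀ v ∈ P, v ≠ 0) ∧ ∀ u ∈ P, ∀ v ∈ P, u ≠ v → sform u v = 1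

/-- The six pentades of the paper. -/
def pentades : Finset (Finset (Fin 4 → ZMod 2)) :=
  { {![0,0,0,1], ![0,1,0,0], ![0,1,1,1], ![1,1,0,1], ![1,1,1,1]},
    {![0,0,0,1], ![0,1,0,1], ![0,1,1,0], ![1,1,0,0], ![1,1,1,0]},
    {![0,0,1,0], ![1,0,0,0], ![1,0,1,1], ![1,1,1,0], ![1,1,1,1]},
    {![0,0,1,0], ![1,0,0,1], ![1,0,1,0], ![1,1,0,0], ![1,1,0,1]},
    {![0,0,1,1], ![0,1,0,0], ![0,1,0,1], ![1,0,0,1], ![1,0,1,1]},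
    {![0,0,1,1], ![0,1,1,0], ![0,1,1,1], ![1,0,0,0], ![1,0,1,0]} }

/-- Any five-element finset can be written with five (not necessarily listed
as distinct) elements. -/
lemma exists_five {α : Type*} [DecidableEq α] {s : Finset α} (h : s.card = 5) :
    ∃ a b c d e : α, a ≠ b ∧ a ≠ c ∧ a ≠ d ∧ a ≠ e ∧ b ≠ c ∧ b ≠ d ∧ b ≠ e ∧
      c ≠ d ∧ c ≠ e ∧ d ≠ e ∧ s = {a, b, c, d, e} := by
  obtain ⟨a, t1, ha, rfl, h4⟩ := Finset.card_eq_succ.1 h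
  obtain ⟨b, t2, hb, rfl, h3⟩ := Finset.card_eq_succ.1 h4
  obtain ⟨x, y, z, hxy, hxz, hyz, rfl⟩ := Finset.card_eq_three.1 h3
  simp only [Finset.mem_insert, Finset.mem_singleton, not_or] at ha hb
  exact ⟨a, b, x, y, z, ha.1, ha.2.1, ha.2.2.1, ha.2.2.2, hb.1, hb.2.1, hb.2.2,
    hxy, hxz, hyz, rfl⟩

set_option synthInstance.maxHeartbeats 1000000 in
set_option synthInstance.maxSize 2048 in
set_option maxHeartbeats 4000000 in
set_option maxRecDepth 10000 in
lemma key : ∀ a b : Fin 4 → ZMod 2, sform a b = 1 →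
    ∀ c, sform a c = 1 → sform b c = 1 →
    ∀ d, sform a d = 1 → sform b d = 1 → sform c d = 1 →
    ∀ e, sform a e = 1 → sform b e = 1 → sform c e = 1 → sform d e = 1 →
    ({a, b, c, d, e} : Finset (Fin 4 → ZMod 2)) ∈ pentades := by decide

set_option maxHeartbeats 4000000 in
set_option maxRecDepth 10000 in
lemma pentades_are_pentades : ∀ P ∈ pentades, IsPentade P := by
  unfold IsPentade; decide

set_option maxHeartbeats 4000000 in
set_option maxRecDepth 10000 in
lemma each_two : ∀ v : Fin 4 → ZMod 2, v ≠ 0 →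
    (pentades.filter (fun P => v ∈ P)).card = 2 := by decide

/-- The pentades are exactly the six listed ones, and each nonzero vector
belongs to exactly two of them. -/
theorem pentades_classification :
    (∀ P : Finset (Fin 4 → ZMod 2), IsPentade P ↔ P ∈ pentades) ∧
    (∀ v : Fin 4 → ZMod 2, v ≠ 0 →
      (pentades.filter (fun P => v ∈ P)).card = 2) := by
  refine ⟨fun P => ⟨fun hP => ?_, fun hP => pentades_are_pentades P hP⟩, each_two⟩
  obtain ⟨hcard, -, hpair⟩ := hP
  obtain ⟨a, b, c, d, e, hab, hac, had, hae, hbc, hbd, hbe, hcd, hce, hde, rfl⟩ :=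
    exists_five hcard
  have ma : a ∈ ({a, b, c, d, e} : Finset (Fin 4 → ZMod 2)) := by simp
  have mb : b ∈ ({a, b, c, d, e} : Finset (Fin 4 → ZMod 2)) := by simp
  have mc : c ∈ ({a, b, c, d, e} : Finset (Fin 4 → ZMod 2)) := by simp
  have md : d ∈ ({a, b, c, d, e} : Finset (Fin 4 → ZMod 2)) := by simp
  have me : e ∈ ({a, b, c, d, e} : Finset (Fin 4 → ZMod 2)) := by simp
  exact key a b (hpair a ma b mb hab)
    c (hpair a ma c mc hac) (hpair b mb c mc hbc)
    d (hpair a ma d md had) (hpair b mb d md hbd) (hpair c mc d md hcd)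
    e (hpair a ma e me hae) (hpair b mb e me hbe) (hpair c mc e me hce)
    (hpair d md e me hde)
end
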